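/- Let λ > 0 and t ≥ 0. The characteristic function of an auxiliary-Poisson distributed random variable θ ~ Π(t; λ) — defined as θ = Σ_{i=0}^{N_t - 1} τ_i where N_t ~ Poisson(λt) is independent of the i.i.d. sequence τ₀, τ₁, ... ~ Exp(λ) — is φ(ω) = exp( (iω/(λ - iω)) · λt ) for all ω ∈ ℝ. -/

import Mathlib

open MeasureTheory ProbabilityTheory Set Filter Topology
open scoped ENNReal NNReal

lemma aux_integral_cexp_Ioi {c : ℂ} (hc : c.re < 0) :
    ∫ x : ℝ in Set.Ioi 0, Complex.exp (c * x) = -c⁻¹ := by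
  have hc0 : c ≠ 0 := by
    intro h; rw [h] at hc; simp at hc
  have hnorm : ∀ x : ℝ, ‖Complex.exp (c * x)‖ = Real.exp (c.re * x) := by
    intro x
    rw [Complex.norm_exp]
    congr 1
    simp [Complex.mul_re]
  have hint : IntegrableOn (fun x : ℝ => Complex.exp (c * x)) (Set.Ioi 0) := by
    refine Integrable.mono' (exp_neg_integrableOn_Ioi 0 (neg_pos.mpr hc)) ?_ ?_
    · exact (Complex.measurable_exp.comp
        ((measurable_const.mul Complex.measurable_ofReal))).aestronglyMeasurable
    · filter_upwards with x
      rw [hnorm x]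
      apply le_of_eq
      congr 1
      ring
  have h1 : Tendsto (fun b : ℝ => ∫ x in (0:ℝ)..b, Complex.exp (c * x)) atTop
      (𝓝 (∫ x : ℝ in Set.Ioi 0, Complex.exp (c * x))) :=
    intervalIntegral_tendsto_integral_Ioi 0 hint tendsto_id
  have hzero : Tendsto (fun b : ℝ => Complex.exp (c * b)) atTop (𝓝 0) := by
    rw [tendsto_zero_iff_norm_tendsto_zero]
    simp_rw [hnorm]
    have hb : Tendsto (fun b : ℝ => c.re * b) atTop atBot :=
      tendsto_id.const_mul_atTop_of_neg hc
    exact Real.tendsto_exp_atBot.comp hb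
  have h2 : Tendsto (fun b : ℝ => ∫ x in (0:ℝ)..b, Complex.exp (c * x)) atTop (𝓝 (-c⁻¹)) := by
    have key : ∀ b : ℝ, ∫ x in (0:ℝ)..b, Complex.exp (c * x)
        = (Complex.exp (c * b) - 1) / c := by
      intro b; rw [integral_exp_mul_complex hc0]; norm_num
    simp_rw [key]
    have h3 : Tendsto (fun b : ℝ => (Complex.exp (c * b) - 1) / c) atTop
        (𝓝 ((0 - 1) / c)) := (hzero.sub tendsto_const_nhds).div_const c
    simpa [neg_div] using h3
  exact tendsto_nhds_unique h1 h2

lemma aux_exp_charFun {lam : ℝ} (hlam : 0 < lam) (ω' : ℝ) :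
    ∫ x : ℝ, Complex.exp (Complex.I * ω' * x) ∂(expMeasure lam) =
      lam / (lam - Complex.I * ω') := by
  have hpdf_meas : Measurable fun x => (gammaPDFReal 1 lam x).toNNReal :=
    (measurable_gammaPDFReal 1 lam).real_toNNReal
  have hμ : expMeasure lam =
      volume.withDensity (fun x => ((gammaPDFReal 1 lam x).toNNReal : ℝ≥0∞)) := rfl
  rw [hμ, integral_withDensity_eq_integral_smul hpdf_meas]
  have hpdf : ∀ x : ℝ, gammaPDFReal 1 lam x =
      if 0 ≤ x then lam * Real.exp (-(lam * x)) else 0 := by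
    intro x
    simp [gammaPDFReal, Real.Gamma_one, Real.rpow_one, Real.rpow_zero]
  have hstep : ∀ x : ℝ, (gammaPDFReal 1 lam x).toNNReal • Complex.exp (Complex.I * ω' * x) =
      Set.indicator (Set.Ici (0:ℝ))
        (fun x : ℝ => (lam : ℂ) * Complex.exp ((Complex.I * ω' - lam) * x)) x := by
    intro x
    rw [NNReal.smul_def, Real.coe_toNNReal _ (gammaPDFReal_nonneg zero_lt_one hlam x), hpdf]
    by_cases hx : 0 ≤ x
    · rw [if_pos hx, Set.indicator_of_mem (Set.mem_Ici.mpr hx)]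
      calc (lam * Real.exp (-(lam * x))) • Complex.exp (Complex.I * ω' * x)
          = (lam : ℂ) * (Complex.exp (((-(lam * x) : ℝ) : ℂ)) *
            Complex.exp (Complex.I * ω' * x)) := by
            rw [Complex.real_smul]; push_cast [Complex.ofReal_exp]; ring
        _ = (lam : ℂ) * Complex.exp ((Complex.I * ω' - lam) * x) := by
            rw [← Complex.exp_add]; congr 1; push_cast; ring
    · rw [if_neg hx, Set.indicator_of_notMem (fun h => hx (Set.mem_Ici.mp h))]
      simp
  simp_rw [hstep]
  rw [integral_indicator measurableSet_Ici, integral_Ici_eq_integral_Ioi,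
    integral_const_mul]
  have hcre : (Complex.I * ω' - lam).re < 0 := by
    simp [Complex.sub_re, Complex.mul_re]
    linarith
  rw [aux_integral_cexp_Ioi hcre, ← inv_neg, neg_sub, div_eq_mul_inv]

lemma aux_indep_integral_mul {Ω : Type*} [MeasurableSpace Ω] {μ : Measure Ω}
    [IsFiniteMeasure μ] {β β' : Type*} {mβ : MeasurableSpace β} {mβ' : MeasurableSpace β'}
    {X : Ω → β} {Y : Ω → β'} (hX : Measurable X) (hY : Measurable Y)
    (h : IndepFun X Y μ) {f : β → ℂ} {g : β' → ℂ} (hf : Measurable f) (hg : Measurable g) :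
    ∫ ω, f (X ω) * g (Y ω) ∂μ = (∫ ω, f (X ω) ∂μ) * ∫ ω, g (Y ω) ∂μ := by
  have hmap := (indepFun_iff_map_prod_eq_prod_map_map hX.aemeasurable hY.aemeasurable).mp h
  have hsm : AEStronglyMeasurable (fun z : β × β' => f z.1 * g z.2)
      (μ.map fun ω => (X ω, Y ω)) :=
    ((hf.comp measurable_fst).mul (hg.comp measurable_snd)).aestronglyMeasurable
  have h1 : ∫ ω, f (X ω) * g (Y ω) ∂μ
      = ∫ z, f z.1 * g z.2 ∂(μ.map fun ω => (X ω, Y ω)) :=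
    (integral_map (hX.prodMk hY).aemeasurable hsm).symm
  have hfin1 : IsFiniteMeasure (μ.map X) := Measure.isFiniteMeasure_map μ X
  have hfin2 : IsFiniteMeasure (μ.map Y) := Measure.isFiniteMeasure_map μ Y
  rw [h1, hmap, integral_prod_mul,
    integral_map hX.aemeasurable hf.aestronglyMeasurable,
    integral_map hY.aemeasurable hg.aestronglyMeasurable]

/-- The characteristic function of an auxiliary-Poisson random variable
`θ = ∑_{i=0}^{N_t-1} τ_i` (with `N_t ~ Poisson(λt)` independent of i.i.d.
`τ_i ~ Exp(λ)`) is `φ(ω) = exp((iω/(λ-iω))·λt)`. -/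
theorem stmt_8 {Ω : Type*} [MeasureSpace Ω] [IsProbabilityMeasure (ℙ : Measure Ω)]
    (lam t : ℝ) (hlam : 0 < lam) (ht : 0 ≤ t)
    (N : Ω → ℕ) (τ : ℕ → Ω → ℝ)
    (hN : Measurable N) (hτ : ∀ i, Measurable (τ i))
    (hNdist : ∀ n : ℕ, ℙ {ω | N ω = n} =
      ENNReal.ofReal (Real.exp (-(lam * t)) * (lam * t) ^ n / n.factorial))
    (hτdist : ∀ i, Measure.map (τ i) ℙ = expMeasure lam)
    (hiid : iIndepFun τ ℙ)
    (hindep : IndepFun N (fun ω i => τ i ω) ℙ)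
    (θ : Ω → ℝ) (hθ : ∀ ω, θ ω = ∑ i ∈ Finset.range (N ω), τ i ω) :
    ∀ ω' : ℝ,
      ∫ ω, Complex.exp (Complex.I * ω' * θ ω) ∂ℙ =
        Complex.exp (Complex.I * ω' / (lam - Complex.I * ω') * (lam * t)) := by
  intro ω'
  have hne : (lam : ℂ) - Complex.I * ω' ≠ 0 := by
    intro h
    have := congrArg Complex.re h
    simp [Complex.sub_re, Complex.mul_re] at this
    exact hlam.ne' this
  set K : ℂ := lam / (lam - Complex.I * ω') with hK
  have hf : Measurable fun x : ℝ => Complex.exp (Complex.I * ω' * x) :=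
    Complex.measurable_exp.comp (measurable_const.mul Complex.measurable_ofReal)
  have hSmeas : ∀ n, Measurable fun ω => ∑ i ∈ Finset.range n, τ i ω :=
    fun n => Finset.measurable_sum _ (fun i _ => hτ i)
  -- characteristic function of a single exponential
  have hEi : ∀ i, ∫ ω, Complex.exp (Complex.I * ω' * τ i ω) ∂ℙ = K := by
    intro i
    rw [← integral_map (hτ i).aemeasurable hf.aestronglyMeasurable, hτdist i,
      aux_exp_charFun hlam]
  -- characteristic function of partial sums
  have hprod : ∀ n, ∫ ω, Complex.exp (Complex.I * ω' * ∑ i ∈ Finset.range n, τ i ω) ∂ℙ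
      = K ^ n := by
    intro n
    induction n with
    | zero => simp
    | succ n ih =>
      have hind : IndepFun (fun ω => ∑ i ∈ Finset.range n, τ i ω) (τ n) ℙ := by
        have h := hiid.indepFun_sum_range_succ hτ n
        have : (∑ j ∈ Finset.range n, τ j) = fun ω => ∑ i ∈ Finset.range n, τ i ω := by
          funext ω; simp
        rwa [this] at h
      calc ∫ ω, Complex.exp (Complex.I * ω' * ∑ i ∈ Finset.range (n+1), τ i ω) ∂ℙ
          = ∫ ω, Complex.exp (Complex.I * ω' * ∑ i ∈ Finset.range n, τ i ω) *
              Complex.exp (Complex.I * ω' * τ n ω) ∂ℙ := by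
            refine integral_congr_ae (Filter.Eventually.of_forall fun ω => ?_)
            simp only [Finset.sum_range_succ, Complex.ofReal_add, mul_add, Complex.exp_add]
        _ = (∫ ω, Complex.exp (Complex.I * ω' * ∑ i ∈ Finset.range n, τ i ω) ∂ℙ) *
              ∫ ω, Complex.exp (Complex.I * ω' * τ n ω) ∂ℙ :=
            aux_indep_integral_mul (hSmeas n) (hτ n) hind hf hf
        _ = K ^ n * K := by rw [ih, hEi n]
        _ = K ^ (n + 1) := by ring
  -- measurability and integrability of the integrand
  have hθm : Measurable θ := by
    have h1 : Measurable fun p : (ℕ → ℝ) × ℕ => ∑ i ∈ Finset.range p.2, p.1 i := by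
      apply measurable_from_prod_countable_left
      intro n
      dsimp only
      exact Finset.measurable_sum _ (fun i _ => measurable_pi_apply i)
    have h2 : θ = fun ω => (fun p : (ℕ → ℝ) × ℕ => ∑ i ∈ Finset.range p.2, p.1 i)
        ((fun i => τ i ω), N ω) := funext hθ
    rw [h2]
    exact h1.comp ((measurable_pi_lambda _ hτ).prodMk hN)
  have hFmeas : Measurable fun ω => Complex.exp (Complex.I * ω' * θ ω) := hf.comp hθm
  have hFint : Integrable (fun ω => Complex.exp (Complex.I * ω' * θ ω)) ℙ := by
    refine Integrable.mono' (integrable_const 1) hFmeas.aestronglyMeasurable ?_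
    filter_upwards with ω
    rw [Complex.norm_exp]
    simp [Complex.mul_re, Complex.mul_im]
  -- partition over the values of N
  have hsets : ∀ n : ℕ, MeasurableSet {ω | N ω = n} := fun n =>
    hN (measurableSet_singleton n)
  have hunion : (⋃ n, {ω | N ω = n}) = Set.univ := by
    ext ω; simp
  have hdisj : Pairwise (Function.onFun Disjoint fun n => {ω | N ω = n}) := by
    intro m n hmn
    simp only [Function.onFun, Set.disjoint_left]
    rintro ω (h1 : N ω = m) (h2 : N ω = n)
    exact hmn (h1 ▸ h2 ▸ rfl)
  have hsum : ∫ ω, Complex.exp (Complex.I * ω' * θ ω) ∂ℙ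
      = ∑' n : ℕ, ∫ ω in {ω | N ω = n}, Complex.exp (Complex.I * ω' * θ ω) ∂ℙ := by
    rw [← setIntegral_univ, ← hunion]
    exact integral_iUnion hsets hdisj hFint.integrableOn
  -- compute each piece
  have hpiece : ∀ n : ℕ, ∫ ω in {ω | N ω = n}, Complex.exp (Complex.I * ω' * θ ω) ∂ℙ
      = (ℙ {ω | N ω = n}).toReal * K ^ n := by
    intro n
    have hcongr : ∫ ω in {ω | N ω = n}, Complex.exp (Complex.I * ω' * θ ω) ∂ℙ
        = ∫ ω in {ω | N ω = n},
            Complex.exp (Complex.I * ω' * ∑ i ∈ Finset.range n, τ i ω) ∂ℙ := by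
      refine setIntegral_congr_fun (hsets n) (fun ω hω => ?_)
      have : N ω = n := hω
      rw [hθ ω, this]
    set g : ℕ → ℂ := fun m => if m = n then 1 else 0 with hg
    have hgm : Measurable g := measurable_from_top
    have hindN : IndepFun N (fun ω => ∑ i ∈ Finset.range n, τ i ω) ℙ := by
      have hsummeas : Measurable fun x : ℕ → ℝ => ∑ i ∈ Finset.range n, x i :=
        Finset.measurable_sum _ (fun i _ => measurable_pi_apply i)
      exact hindep.comp measurable_id hsummeas
    have hind2 : ∫ ω, g (N ω) * Complex.exp (Complex.I * ω' * ∑ i ∈ Finset.range n, τ i ω) ∂ℙ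
        = (∫ ω, g (N ω) ∂ℙ) * ∫ ω, Complex.exp (Complex.I * ω' *
            ∑ i ∈ Finset.range n, τ i ω) ∂ℙ :=
      aux_indep_integral_mul hN (hSmeas n) hindN hgm hf
    have hindic : ∫ ω in {ω | N ω = n},
        Complex.exp (Complex.I * ω' * ∑ i ∈ Finset.range n, τ i ω) ∂ℙ
        = ∫ ω, g (N ω) * Complex.exp (Complex.I * ω' * ∑ i ∈ Finset.range n, τ i ω) ∂ℙ := by
      rw [← integral_indicator (hsets n)]
      refine integral_congr_ae (Filter.Eventually.of_forall fun ω => ?_)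
      by_cases h : N ω = n
      · simp [Set.indicator_apply, h, hg]
      · simp [Set.indicator_apply, h, hg]
    have hgint : ∫ ω, g (N ω) ∂ℙ = ((ℙ {ω | N ω = n}).toReal : ℂ) := by
      have : (fun ω => g (N ω)) = Set.indicator {ω | N ω = n} (fun _ => (1 : ℂ)) := by
        funext ω
        by_cases h : N ω = n
        · simp [Set.indicator_apply, h, hg]
        · simp [Set.indicator_apply, h, hg]
      rw [this, integral_indicator_const _ (hsets n)]
      simp [Measure.real]
    rw [hcongr, hindic, hind2, hgint, hprod n]
  -- sum the series
  rw [hsum]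
  have hterm : ∀ n : ℕ,
      ((ℙ {ω | N ω = n}).toReal : ℂ) * K ^ n
        = (Real.exp (-(lam * t)) : ℂ) * (((lam * t : ℝ) : ℂ) * K) ^ n / n.factorial := by
    intro n
    rw [hNdist n, ENNReal.toReal_ofReal (by positivity)]
    push_cast
    rw [mul_pow]
    ring
  calc ∑' n : ℕ, ∫ ω in {ω | N ω = n}, Complex.exp (Complex.I * ω' * θ ω) ∂ℙ
      = ∑' n : ℕ, ((ℙ {ω | N ω = n}).toReal : ℂ) * K ^ n := by
        exact tsum_congr fun n => by rw [hpiece n]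
    _ = ∑' n : ℕ, (Real.exp (-(lam * t)) : ℂ) * ((((lam * t : ℝ) : ℂ) * K) ^ n / n.factorial) := by
        refine tsum_congr fun n => ?_
        rw [hterm n, mul_div_assoc]
    _ = (Real.exp (-(lam * t)) : ℂ) * ∑' n : ℕ, (((lam * t : ℝ) : ℂ) * K) ^ n / n.factorial :=
        tsum_mul_left
    _ = (Real.exp (-(lam * t)) : ℂ) * Complex.exp (((lam * t : ℝ) : ℂ) * K) := by
        rw [Complex.exp_eq_exp_ℂ, NormedSpace.exp_eq_tsum_div]
    _ = Complex.exp (Complex.I * ω' / (lam - Complex.I * ω') * (lam * t)) := by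
        rw [Complex.ofReal_exp, ← Complex.exp_add]
        congr 1
        rw [hK]
        push_cast
        field_simp
        ring
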